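/- Let V be a finite-dimensional real vector space with an internal direct sum decomposition V = F ⊕ G, and let Ω⁺ and Ω⁻ be alternating bilinear forms on V whose left kernels are exactly F and exactly G respectively. Then ω := (1/2)(Ω⁺ + Ω⁻) and η := (1/2)(Ω⁺ − Ω⁻) are nondegenerate alternating bilinear forms, and their recursion operator A satisfies A g = g for all g ∈ G and A f = −f for all f ∈ F; in particular A² = Id. -/

import Mathlib

/-- Let `V = F ⊕ G` be an internal direct sum, and let `Ω⁺`, `Ω⁻` be
alternating bilinear forms whose left kernels are exactly `F` and exactly `G` respectively.
Then `ω := ½(Ω⁺ + Ω⁻)` and `η := ½(Ω⁺ - Ω⁻)` are nondegenerate alternating bilinear forms,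
and their recursion operator `A` satisfies `A g = g` for `g ∈ G`, `A f = -f` for `f ∈ F`;
in particular `A² = Id`. -/
theorem symplectic_pair_gives_recursion_operator_square_id
    (V : Type*) [AddCommGroup V] [Module ℝ V] [FiniteDimensional ℝ V]
    (F G : Submodule ℝ V) (hFG : IsCompl F G)
    (Ωp Ωm : V →ₗ[ℝ] V →ₗ[ℝ] ℝ)
    (hΩp_alt : ∀ x : V, Ωp x x = 0) (hΩm_alt : ∀ x : V, Ωm x x = 0)
    (hΩp_ker : ∀ x : V, (∀ y : V, Ωp x y = 0) ↔ x ∈ F)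
    (hΩm_ker : ∀ x : V, (∀ y : V, Ωm x y = 0) ↔ x ∈ G) :
    ∀ ω η : V →ₗ[ℝ] V →ₗ[ℝ] ℝ,
      ω = (1 / 2 : ℝ) • (Ωp + Ωm) → η = (1 / 2 : ℝ) • (Ωp - Ωm) →
      (∀ x : V, ω x x = 0) ∧ (∀ x : V, η x x = 0) ∧
      (∀ x : V, (∀ y : V, ω x y = 0) → x = 0) ∧
      (∀ x : V, (∀ y : V, η x y = 0) → x = 0) ∧
      (∃ A : V →ₗ[ℝ] V, (∀ x y : V, ω x y = η (A x) y) ∧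
        (∀ g ∈ G, A g = g) ∧ (∀ f ∈ F, A f = -f) ∧ A ∘ₗ A = LinearMap.id) := by
  intro ω η hω hη
  -- skew-symmetry
  have hΩp_skew : ∀ x y : V, Ωp x y = -Ωp y x := by
    intro x y
    have h := hΩp_alt (x + y)
    simp only [map_add, LinearMap.add_apply, hΩp_alt] at h
    linarith
  have hΩm_skew : ∀ x y : V, Ωm x y = -Ωm y x := by
    intro x y
    have h := hΩm_alt (x + y)
    simp only [map_add, LinearMap.add_apply, hΩm_alt] at h
    linarith
  have hΩpF : ∀ f ∈ F, ∀ y : V, Ωp f y = 0 := fun f hf => (hΩp_ker f).mpr hf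
  have hΩmG : ∀ g ∈ G, ∀ y : V, Ωm g y = 0 := fun g hg => (hΩm_ker g).mpr hg
  -- projections
  set pF : V →ₗ[ℝ] V := F.subtype ∘ₗ F.projectionOnto G hFG with hpF
  set pG : V →ₗ[ℝ] V := G.subtype ∘ₗ G.projectionOnto F hFG.symm with hpG
  have hsum : ∀ x : V, pF x + pG x = x := fun x =>
    Submodule.projection_add_projection_eq_self hFG x
  have hpF_mem : ∀ x : V, pF x ∈ F := fun x => (F.projectionOnto G hFG x).2
  have hpG_mem : ∀ x : V, pG x ∈ G := fun x => (G.projectionOnto F hFG.symm x).2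
  have hpF_left : ∀ f ∈ F, pF f = f := by
    intro f hf
    simp [hpF, Submodule.projectionOnto_apply_of_mem_left hFG hf]
  have hpG_left : ∀ g ∈ G, pG g = g := by
    intro g hg
    simp [hpG, Submodule.projectionOnto_apply_of_mem_left hFG.symm hg]
  have hpF_right : ∀ g ∈ G, pF g = 0 := by
    intro g hg
    simp [hpF, Submodule.projectionOnto_apply_of_mem_right hFG hg]
  have hpG_right : ∀ f ∈ F, pG f = 0 := by
    intro f hf
    simp [hpG, Submodule.projectionOnto_apply_of_mem_right hFG.symm hf]
  -- key nondegeneracy-style lemma: if Ωp (pG x) y + c * Ωm (pF x) y = 0 for all y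
  -- (with c = ±1), then x = 0.
  have key : ∀ (c : ℝ) (_ : c ≠ 0) (x : V),
      (∀ y : V, Ωp x y + c * Ωm x y = 0) → x = 0 := by
    intro c hc x hx
    have hx' : ∀ y : V, Ωp (pG x) y + c * Ωm (pF x) y = 0 := by
      intro y
      have h1 : Ωp x y = Ωp (pG x) y := by
        conv_lhs => rw [← hsum x]
        rw [map_add, LinearMap.add_apply, hΩpF _ (hpF_mem x) y, zero_add]
      have h2 : Ωm x y = Ωm (pF x) y := by
        conv_lhs => rw [← hsum x]
        rw [map_add, LinearMap.add_apply, hΩmG _ (hpG_mem x) y, add_zero]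
      rw [← h1, ← h2]
      exact hx y
    -- Ωp (pG x) vanishes on F, Ωm (pF x) vanishes on G
    have hΩpg : ∀ y : V, Ωp (pG x) y = 0 := by
      intro y
      have hyF : Ωp (pG x) (pF y) = 0 := by
        rw [hΩp_skew]; rw [hΩpF _ (hpF_mem y)]; ring
      have hyG : Ωm (pF x) (pG y) = 0 := by
        rw [hΩm_skew]; rw [hΩmG _ (hpG_mem y)]; ring
      have e1 := hx' (pF y)
      have e2 := hx' (pG y)
      rw [hyF] at e1
      rw [hyG] at e2
      have hmF : Ωm (pF x) (pF y) = 0 :=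
        (mul_eq_zero.mp (by linarith : c * Ωm (pF x) (pF y) = 0)).resolve_left hc
      have hpG2 : Ωp (pG x) (pG y) = 0 := by linarith
      calc Ωp (pG x) y = Ωp (pG x) (pF y + pG y) := by rw [hsum]
        _ = 0 := by rw [map_add, hyF, hpG2, add_zero]
    have hΩmf : ∀ y : V, Ωm (pF x) y = 0 := by
      intro y
      have e := hx' y
      have := hΩpg y
      have : c * Ωm (pF x) y = 0 := by linarith
      exact (mul_eq_zero.mp this).resolve_left hc
    have hgF : pG x ∈ F := (hΩp_ker _).mp hΩpg
    have hfG : pF x ∈ G := (hΩm_ker _).mp hΩmf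
    have hg0 : pG x = 0 := by
      have := hFG.inf_eq_bot
      have : pG x ∈ F ⊓ G := ⟨hgF, hpG_mem x⟩
      simpa [hFG.inf_eq_bot] using this
    have hf0 : pF x = 0 := by
      have : pF x ∈ F ⊓ G := ⟨hpF_mem x, hfG⟩
      simpa [hFG.inf_eq_bot] using this
    rw [← hsum x, hf0, hg0, add_zero]
  refine ⟨?_, ?_, ?_, ?_, ?_⟩
  · intro x; simp [hω, hΩp_alt, hΩm_alt]
  · intro x; simp [hη, hΩp_alt, hΩm_alt]
  · intro x hx
    refine key 1 one_ne_zero x ?_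
    intro y
    have := hx y
    simp only [hω, LinearMap.smul_apply, LinearMap.add_apply, smul_eq_mul] at this
    linarith
  · intro x hx
    refine key (-1) (by norm_num) x ?_
    intro y
    have := hx y
    simp only [hη, LinearMap.smul_apply, LinearMap.sub_apply, smul_eq_mul] at this
    linarith
  · refine ⟨pG - pF, ?_, ?_, ?_, ?_⟩
    · intro x y
      have h1 : Ωp (pG x - pF x) y = Ωp x y := by
        rw [map_sub, LinearMap.sub_apply, hΩpF _ (hpF_mem x) y, sub_zero]
        conv_rhs => rw [← hsum x]
        rw [map_add, LinearMap.add_apply, hΩpF _ (hpF_mem x) y, zero_add]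
      have h2 : Ωm (pG x - pF x) y = -Ωm x y := by
        rw [map_sub, LinearMap.sub_apply, hΩmG _ (hpG_mem x) y, zero_sub]
        conv_rhs => rw [← hsum x]
        rw [map_add, LinearMap.add_apply, hΩmG _ (hpG_mem x) y, add_zero]
      simp only [hω, hη, LinearMap.smul_apply, LinearMap.add_apply, LinearMap.sub_apply,
        smul_eq_mul, h1, h2]
      ring
    · intro g hg
      simp [LinearMap.sub_apply, hpG_left g hg, hpF_right g hg]
    · intro f hf
      simp [LinearMap.sub_apply, hpG_right f hf, hpF_left f hf]
    · ext x
      simp only [LinearMap.comp_apply, LinearMap.id_apply, LinearMap.sub_apply, map_sub]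
      rw [hpG_left _ (hpG_mem x), hpF_right _ (hpG_mem x),
        hpG_right _ (hpF_mem x), hpF_left _ (hpF_mem x)]
      rw [sub_zero, zero_sub, sub_neg_eq_add, add_comm]
      exact hsum x
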